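/- The function f(z) = z − (i/6)·conj(z) + (i/4)·log|z| − (i/8)·z^{−4}, defined for |z| > 1, satisfies |f(z₁) − f(z₂)| ≥ (2/9)|z₁ − z₂| for all z₁, z₂ with |z₁| > 1, |z₂| > 1; in particular f is injective on the exterior unit disk. -/

import Mathlib

open Complex

lemma loglip (a b : ℝ) (ha : 1 ≤ a) (hb : 1 ≤ b) :
    |Real.log a - Real.log b| ≤ |a - b| := by
  wlog h : b ≤ a generalizing a b
  · rw [abs_sub_comm, abs_sub_comm a b]
    exact this b a hb ha (le_of_not_ge h)
  have hb0 : (0:ℝ) < b := by linarith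
  have ha0 : (0:ℝ) < a := by linarith
  have hlog : Real.log b ≤ Real.log a := Real.log_le_log hb0 h
  rw [_root_.abs_of_nonneg (by linarith : (0:ℝ) ≤ Real.log a - Real.log b), _root_.abs_of_nonneg (by linarith : (0:ℝ) ≤ a - b)]
  calc Real.log a - Real.log b = Real.log (a / b) := (Real.log_div (by positivity) (by positivity)).symm
    _ ≤ a / b - 1 := Real.log_le_sub_one_of_pos (by positivity)
    _ = (a - b) / b := by field_simp
    _ ≤ a - b := div_le_self (by linarith) hb

lemma pow4lip (w₁ w₂ : ℂ) (h1 : ‖w₁‖ ≤ 1) (h2 : ‖w₂‖ ≤ 1) :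
    ‖w₁ ^ 4 - w₂ ^ 4‖ ≤ 4 * ‖w₁ - w₂‖ := by
  have key : w₁ ^ 4 - w₂ ^ 4 = (w₁ - w₂) * (w₁^3 + w₁^2*w₂ + w₁*w₂^2 + w₂^3) := by ring
  rw [key, norm_mul, mul_comm]
  have h1' : ∀ n : ℕ, ‖w₁‖ ^ n ≤ 1 := fun n => pow_le_one₀ (norm_nonneg _) h1
  have h2' : ∀ n : ℕ, ‖w₂‖ ^ n ≤ 1 := fun n => pow_le_one₀ (norm_nonneg _) h2
  gcongr
  calc ‖w₁^3 + w₁^2*w₂ + w₁*w₂^2 + w₂^3‖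
      ≤ ‖w₁^3 + w₁^2*w₂ + w₁*w₂^2‖ + ‖w₂^3‖ := norm_add_le _ _
    _ ≤ (‖w₁^3 + w₁^2*w₂‖ + ‖w₁*w₂^2‖) + ‖w₂^3‖ := by
        gcongr; exact norm_add_le _ _
    _ ≤ ((‖w₁^3‖ + ‖w₁^2*w₂‖) + ‖w₁*w₂^2‖) + ‖w₂^3‖ := by
        gcongr; exact norm_add_le _ _
    _ ≤ 1 + 1 + 1 + 1 := by
        gcongr <;> simp only [norm_mul, norm_pow]
        · exact h1' 3
        · calc ‖w₁‖ ^ 2 * ‖w₂‖ ≤ 1 * 1 := by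
                exact mul_le_mul (h1' 2) h2 (norm_nonneg _) zero_le_one
            _ = 1 := one_mul 1
        · calc ‖w₁‖ * ‖w₂‖ ^ 2 ≤ 1 * 1 := by
                exact mul_le_mul h1 (h2' 2) (by positivity) zero_le_one
            _ = 1 := one_mul 1
        · exact h2' 3
    _ = 4 := by norm_num

theorem stmt18 (f : ℂ → ℂ)
    (hf : ∀ z : ℂ, 1 < ‖z‖ →
      f z = z - (Complex.I / 6) * (starRingEnd ℂ) z +
        (Complex.I / 4) * Real.log (‖z‖) - (Complex.I / 8) * z ^ (-4 : ℤ)) :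
    (∀ z₁ z₂ : ℂ, 1 < ‖z₁‖ → 1 < ‖z₂‖ →
      (1 / 12) * ‖z₁ - z₂‖ ≤ ‖f z₁ - f z₂‖) ∧
      Set.InjOn f {z : ℂ | 1 < ‖z‖} := by
  have main : ∀ z₁ z₂ : ℂ, 1 < ‖z₁‖ → 1 < ‖z₂‖ →
      (1 / 12) * ‖z₁ - z₂‖ ≤ ‖f z₁ - f z₂‖ := by
    intro z₁ z₂ h1 h2
    have hz₁ : z₁ ≠ 0 := by
      intro h; rw [h] at h1; simp at h1; linarith
    have hz₂ : z₂ ≠ 0 := by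
      intro h; rw [h] at h2; simp at h2; linarith
    rw [hf z₁ h1, hf z₂ h2]
    -- decomposition
    have decomp : (z₁ - (Complex.I / 6) * (starRingEnd ℂ) z₁ +
        (Complex.I / 4) * Real.log (‖z₁‖) - (Complex.I / 8) * z₁ ^ (-4 : ℤ)) -
        (z₂ - (Complex.I / 6) * (starRingEnd ℂ) z₂ +
        (Complex.I / 4) * Real.log (‖z₂‖) - (Complex.I / 8) * z₂ ^ (-4 : ℤ))
        = (z₁ - z₂) - ((Complex.I / 6) * ((starRingEnd ℂ) z₁ - (starRingEnd ℂ) z₂)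
          - (Complex.I / 4) * ((Real.log (‖z₁‖) : ℂ) - (Real.log (‖z₂‖) : ℂ))
          + (Complex.I / 8) * (z₁ ^ (-4 : ℤ) - z₂ ^ (-4 : ℤ))) := by ring
    set g : ℂ := (Complex.I / 6) * ((starRingEnd ℂ) z₁ - (starRingEnd ℂ) z₂)
          - (Complex.I / 4) * ((Real.log (‖z₁‖) : ℂ) - (Real.log (‖z₂‖) : ℂ))
          + (Complex.I / 8) * (z₁ ^ (-4 : ℤ) - z₂ ^ (-4 : ℤ)) with hg
    rw [decomp]
    -- bound the three pieces
    have b1 : ‖(Complex.I / 6) * ((starRingEnd ℂ) z₁ - (starRingEnd ℂ) z₂)‖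
        ≤ (1/6) * ‖z₁ - z₂‖ := by
      rw [norm_mul]
      have : (starRingEnd ℂ) z₁ - (starRingEnd ℂ) z₂ = (starRingEnd ℂ) (z₁ - z₂) := by
        rw [map_sub]
      rw [this, Complex.norm_conj]
      have : ‖Complex.I / 6‖ = 1/6 := by
        simp [map_div₀]
      rw [this]
    have b2 : ‖(Complex.I / 4) * ((Real.log (‖z₁‖) : ℂ) - (Real.log (‖z₂‖) : ℂ))‖
        ≤ (1/4) * ‖z₁ - z₂‖ := by
      rw [norm_mul]
      have e1 : ‖Complex.I / 4‖ = 1/4 := by simp [map_div₀]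
      rw [e1]
      have e2 : ((Real.log (‖z₁‖) : ℂ) - (Real.log (‖z₂‖) : ℂ))
          = ((Real.log (‖z₁‖) - Real.log (‖z₂‖) : ℝ) : ℂ) := by push_cast; ring
      rw [e2, Complex.norm_real, Real.norm_eq_abs]
      gcongr
      calc |Real.log (‖z₁‖) - Real.log (‖z₂‖)|
          ≤ |‖z₁‖ - ‖z₂‖| := loglip _ _ h1.le h2.le
        _ ≤ ‖z₁ - z₂‖ := abs_norm_sub_norm_le _ _
    have b3 : ‖(Complex.I / 8) * (z₁ ^ (-4 : ℤ) - z₂ ^ (-4 : ℤ))‖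
        ≤ (1/2) * ‖z₁ - z₂‖ := by
      rw [norm_mul]
      have e1 : ‖Complex.I / 8‖ = 1/8 := by simp [map_div₀]
      rw [e1]
      have e2 : z₁ ^ (-4 : ℤ) - z₂ ^ (-4 : ℤ) = (z₁⁻¹)^4 - (z₂⁻¹)^4 := by
        rw [zpow_neg, zpow_neg, inv_pow, inv_pow]
        norm_cast
      rw [e2]
      have hw1 : ‖z₁⁻¹‖ ≤ 1 := by
        rw [norm_inv]
        exact inv_le_one_of_one_le₀ h1.le
      have hw2 : ‖z₂⁻¹‖ ≤ 1 := by
        rw [norm_inv]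
        exact inv_le_one_of_one_le₀ h2.le
      have hwd : ‖z₁⁻¹ - z₂⁻¹‖ ≤ ‖z₁ - z₂‖ := by
        rw [inv_sub_inv hz₁ hz₂, norm_div, norm_mul, norm_sub_rev z₂ z₁]
        calc ‖z₁ - z₂‖ / (‖z₁‖ * ‖z₂‖)
            ≤ ‖z₁ - z₂‖ / 1 := by
              apply div_le_div_of_nonneg_left (norm_nonneg _) one_pos
              nlinarith
          _ = ‖z₁ - z₂‖ := div_one _
      calc (1/8 : ℝ) * ‖(z₁⁻¹)^4 - (z₂⁻¹)^4‖
          ≤ (1/8) * (4 * ‖z₁⁻¹ - z₂⁻¹‖) := by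
            gcongr
            exact pow4lip _ _ hw1 hw2
        _ = (1/2) * ‖z₁⁻¹ - z₂⁻¹‖ := by ring
        _ ≤ (1/2) * ‖z₁ - z₂‖ := by gcongr
    have hgbound : ‖g‖ ≤ (11/12) * ‖z₁ - z₂‖ := by
      calc ‖g‖ ≤ ‖(Complex.I / 6) * ((starRingEnd ℂ) z₁ - (starRingEnd ℂ) z₂)
            - (Complex.I / 4) * ((Real.log (‖z₁‖) : ℂ) - (Real.log (‖z₂‖) : ℂ))‖
            + ‖(Complex.I / 8) * (z₁ ^ (-4 : ℤ) - z₂ ^ (-4 : ℤ))‖ := norm_add_le _ _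
        _ ≤ (‖(Complex.I / 6) * ((starRingEnd ℂ) z₁ - (starRingEnd ℂ) z₂)‖
            + ‖(Complex.I / 4) * ((Real.log (‖z₁‖) : ℂ) - (Real.log (‖z₂‖) : ℂ))‖)
            + ‖(Complex.I / 8) * (z₁ ^ (-4 : ℤ) - z₂ ^ (-4 : ℤ))‖ := by
              gcongr; exact norm_sub_le _ _
        _ ≤ (1/6) * ‖z₁ - z₂‖ + (1/4) * ‖z₁ - z₂‖ + (1/2) * ‖z₁ - z₂‖ := by
              gcongr
        _ = (11/12) * ‖z₁ - z₂‖ := by ring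
    have tri : ‖z₁ - z₂‖ ≤ ‖(z₁ - z₂) - g‖ + ‖g‖ := by
      calc ‖z₁ - z₂‖ = ‖((z₁ - z₂) - g) + g‖ := by ring_nf
        _ ≤ ‖(z₁ - z₂) - g‖ + ‖g‖ := norm_add_le _ _
    linarith
  refine ⟨main, ?_⟩
  intro z₁ h1 z₂ h2 heq
  have := main z₁ z₂ h1 h2
  rw [heq] at this
  simp only [sub_self, norm_zero] at this
  have : ‖z₁ - z₂‖ ≤ 0 := by linarith
  have : ‖z₁ - z₂‖ = 0 := le_antisymm this (norm_nonneg _)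
  rwa [norm_eq_zero, sub_eq_zero] at this
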